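/- (1) For every m ≥ 0, B_m occurs exactly once in the word A_m B_m, namely at position 2^m + 1. (2) For every m ≥ 1, B_m occurs exactly three times in the word B_m A_m B_m, namely at positions 1, 2^{m−1} + 1 and 2^{m+1} + 1. (3) For every m ≥ 1, B_m occurs exactly three times in the word B_m A_m A_m A_m B_m, namely at positions 1, 2^{m−1} + 1 and 2^{m+2} + 1. -/

import Mathlib

/-- The alphabet: letters a, b (for the period-doubling sequence) and c (used by Θ₂). -/
inductive Letter : Type
  | a | b | c
deriving DecidableEq, Repr

open Letter

/-- The period-doubling substitution σ : a ↦ ab, b ↦ aa, extended to words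
(the extra letter c is left untouched; it is never produced). -/
def sigmaw : List Letter → List Letter :=
  fun w => w.flatMap fun x => match x with
    | .a => [.a, .b]
    | .b => [.a, .a]
    | .c => [.c]

/-- A_m = σ^m(a). -/
def A (m : ℕ) : List Letter := sigmaw^[m] [.a]

/-- B_m = σ^m(b). -/
def B (m : ℕ) : List Letter := sigmaw^[m] [.b]

/-- δ_m, the last letter of A_m. -/
def delta (m : ℕ) : Letter := (A m).getLastD .a

/-- The period-doubling sequence D, as a function giving its (n+1)-st letter
(0-indexed); it is the fixed point of σ beginning with a, and A_{n+1} is a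
prefix of it of length 2^{n+1} > n. -/
def D (n : ℕ) : Letter := (A (n + 1)).getD n .a

/-- The finite segment D[i .. i+len−1] of the period-doubling sequence,
with 1-based starting position i. -/
def Dseg (i len : ℕ) : List Letter := (List.range len).map fun k => D (i - 1 + k)

/-- u occurs in the finite word w at (1-based) position i. -/
def OccursAt {α : Type*} (u w : List α) (i : ℕ) : Prop :=
  1 ≤ i ∧ i - 1 + u.length ≤ w.length ∧ (w.drop (i - 1)).take u.length = u

/-- u is a factor of the finite word w. -/
def IsFactor {α : Type*} (u w : List α) : Prop := ∃ i, OccursAt u w i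

/-- u occurs in the period-doubling sequence D at (1-based) position i. -/
def DOccursAt (u : List Letter) (i : ℕ) : Prop := 1 ≤ i ∧ Dseg i u.length = u

/-- u is a factor of the period-doubling sequence D. -/
def FactorD (u : List Letter) : Prop := ∃ i, DOccursAt u i

/-- L(u,p): the starting position of the p-th occurrence (p ≥ 1) of u in D. -/
noncomputable def L (u : List Letter) (p : ℕ) : ℕ := Nat.nth (DOccursAt u) (p - 1)

/-- r_p(u): the p-th return word of u (p ≥ 1), i.e. D[L(u,p) .. L(u,p+1)−1];
r_0(u) is the prefix of D preceding the first occurrence of u. -/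
noncomputable def r (u : List Letter) (p : ℕ) : List Letter :=
  if p = 0 then Dseg 1 (L u 1 - 1) else Dseg (L u p) (L u (p + 1) - L u p)

/-- The morphism τ₁ : a ↦ a, b ↦ bb, extended to words. -/
def tau1 : List Letter → List Letter :=
  fun w => w.flatMap fun x => match x with
    | .a => [.a]
    | .b => [.b, .b]
    | .c => [.c]

/-- The morphism τ₂ : a ↦ ab, b ↦ acac, extended to words. -/
def tau2 : List Letter → List Letter :=
  fun w => w.flatMap fun x => match x with
    | .a => [.a, .b]
    | .b => [.a, .c, .a, .c]
    | .c => [.c]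

/-- Θ₁[p], the p-th letter (p ≥ 1) of Θ₁ = τ₁(D): since |τ₁(w)| ≥ |w|, the p-th
letter of Θ₁ is the p-th letter of the image of the length-p prefix of D. -/
def Theta1 (p : ℕ) : Letter := (tau1 (Dseg 1 p)).getD (p - 1) .a

/-- Θ₂[p], the p-th letter (p ≥ 1) of Θ₂ = τ₂(D). -/
def Theta2 (p : ℕ) : Letter := (tau2 (Dseg 1 p)).getD (p - 1) .a

/-- The envelope word E_{1,m} = A_m with its last letter δ_m deleted. -/
def E1 (m : ℕ) : List Letter := (A m).dropLast

/-- The envelope word E_{2,m} = B_m B_{m−1} with its last letter δ_m deleted. -/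
def E2 (m : ℕ) : List Letter := (B m ++ B (m - 1)).dropLast

/-- Enumeration of the envelope words in the order
E_{1,1} ⊏ E_{2,1} ⊏ E_{1,2} ⊏ E_{2,2} ⊏ …. -/
def Eword (k : ℕ) : List Letter := if k % 2 = 0 then E1 (k / 2 + 1) else E2 (k / 2 + 1)

/-- Env(u): the ⊏-least envelope word having u as a factor. -/
noncomputable def Env (u : List Letter) : List Letter :=
  Eword (sInf {k | IsFactor u (Eword k)})

/-- The letterwise complement exchanging a and b. -/
def comp : Letter → Letter
  | .a => .b
  | .b => .a
  | .c => .c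

def NoC (w : List Letter) : Prop := Letter.c ∉ w

lemma sigmaw_cons (x : Letter) (w : List Letter) :
    sigmaw (x :: w) = (match x with | .a => [Letter.a, Letter.b] | .b => [Letter.a, Letter.a] | .c => [Letter.c]) ++ sigmaw w := rfl

lemma sigmaw_append (u v : List Letter) : sigmaw (u ++ v) = sigmaw u ++ sigmaw v := by
  simp [sigmaw]

lemma length_sigmaw {w : List Letter} (h : NoC w) : (sigmaw w).length = 2 * w.length := by
  induction w with
  | nil => rfl
  | cons x t ih =>
    have hx : x ≠ Letter.c := fun hc => h (hc ▸ (List.mem_cons_self : x ∈ x :: t))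
    have ht : NoC t := fun hc => h (List.mem_cons_of_mem _ hc)
    cases x with
    | a => simp [sigmaw_cons, ih ht]; omega
    | b => simp [sigmaw_cons, ih ht]; omega
    | c => exact absurd rfl hx

lemma noC_sigmaw {w : List Letter} (h : NoC w) : NoC (sigmaw w) := by
  induction w with
  | nil => exact h
  | cons x t ih =>
    have hx : x ≠ Letter.c := fun hc => h (hc ▸ (List.mem_cons_self : x ∈ x :: t))
    have ht : NoC t := fun hc => h (List.mem_cons_of_mem _ hc)
    cases x with
    | a => simpa [sigmaw_cons, NoC] using ih ht
    | b => simpa [sigmaw_cons, NoC] using ih ht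
    | c => exact absurd rfl hx

lemma noC_A (m : ℕ) : NoC (A m) := by
  induction m with
  | zero => intro h; simp [A] at h
  | succ m ih =>
    have : A (m+1) = sigmaw (A m) := Function.iterate_succ_apply' _ _ _
    rw [this]; exact noC_sigmaw ih

lemma noC_B (m : ℕ) : NoC (B m) := by
  induction m with
  | zero => intro h; simp [B] at h
  | succ m ih =>
    have : B (m+1) = sigmaw (B m) := Function.iterate_succ_apply' _ _ _
    rw [this]; exact noC_sigmaw ih

lemma noC_take {w : List Letter} (h : NoC w) (n : ℕ) : NoC (w.take n) :=
  fun hc => h (List.take_subset n w hc)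

lemma noC_drop {w : List Letter} (h : NoC w) (n : ℕ) : NoC (w.drop n) :=
  fun hc => h (List.drop_subset n w hc)

lemma noC_append {u v : List Letter} (hu : NoC u) (hv : NoC v) : NoC (u ++ v) := by
  intro hc; rcases List.mem_append.mp hc with h | h
  · exact hu h
  · exact hv h

lemma sigmaw_inj {u v : List Letter} (hu : NoC u) (hv : NoC v) (h : sigmaw u = sigmaw v) :
    u = v := by
  induction u generalizing v with
  | nil =>
    cases v with
    | nil => rfl
    | cons y t => cases y <;> simp [sigmaw_cons, sigmaw] at h
  | cons x s ih =>
    cases v with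
    | nil => cases x <;> simp [sigmaw_cons, sigmaw] at h
    | cons y t =>
      have hx : x ≠ Letter.c := fun hc => hu (hc ▸ (List.mem_cons_self : x ∈ x :: s))
      have hy : y ≠ Letter.c := fun hc => hv (hc ▸ (List.mem_cons_self : y ∈ y :: t))
      have hs : NoC s := fun hc => hu (List.mem_cons_of_mem _ hc)
      have ht : NoC t := fun hc => hv (List.mem_cons_of_mem _ hc)
      cases x <;> cases y <;>
        first
        | exact absurd rfl hx
        | exact absurd rfl hy
        | (simp only [sigmaw_cons, List.cons_append, List.nil_append, List.cons.injEq] at h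
           first
           | (exact absurd h.2.1 (by decide))
           | (obtain ⟨-, -, h⟩ := h; rw [ih hs ht h]))

lemma drop_sigmaw {w : List Letter} (h : NoC w) (j : ℕ) :
    (sigmaw w).drop (2 * j) = sigmaw (w.drop j) := by
  induction j generalizing w with
  | zero => simp
  | succ j ih =>
    cases w with
    | nil => simp [sigmaw]
    | cons x t =>
      have hx : x ≠ Letter.c := fun hc => h (hc ▸ (List.mem_cons_self : x ∈ x :: t))
      have ht : NoC t := fun hc => h (List.mem_cons_of_mem _ hc)
      have h2 : 2 * (j + 1) = 2 * j + 1 + 1 := by ring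
      cases x with
      | a => simp [sigmaw_cons, h2, List.drop_succ_cons]; simpa using ih ht
      | b => simp [sigmaw_cons, h2, List.drop_succ_cons]; simpa using ih ht
      | c => exact absurd rfl hx

lemma take_sigmaw {w : List Letter} (h : NoC w) (k : ℕ) :
    (sigmaw w).take (2 * k) = sigmaw (w.take k) := by
  induction k generalizing w with
  | zero => simp [sigmaw]
  | succ k ih =>
    cases w with
    | nil => simp [sigmaw]
    | cons x t =>
      have hx : x ≠ Letter.c := fun hc => h (hc ▸ (List.mem_cons_self : x ∈ x :: t))
      have ht : NoC t := fun hc => h (List.mem_cons_of_mem _ hc)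
      have h2 : 2 * (k + 1) = 2 * k + 1 + 1 := by ring
      cases x with
      | a => simp [sigmaw_cons, h2, List.take_succ_cons, ih ht]
      | b => simp [sigmaw_cons, h2, List.take_succ_cons, ih ht]
      | c => exact absurd rfl hx

lemma occ_aligned {u w : List Letter} (hu : NoC u) (hw : NoC w) (j : ℕ) :
    OccursAt (sigmaw u) (sigmaw w) (2 * j + 1) ↔ OccursAt u w (j + 1) := by
  unfold OccursAt
  rw [length_sigmaw hu, length_sigmaw hw]
  simp only [Nat.add_sub_cancel]
  rw [drop_sigmaw hw j, take_sigmaw (noC_drop hw j) u.length]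
  constructor
  · rintro ⟨-, h2, h3⟩
    exact ⟨Nat.le_add_left _ _, by omega,
      sigmaw_inj (noC_take (noC_drop hw j) _) hu h3⟩
  · rintro ⟨-, h2, h3⟩
    exact ⟨Nat.le_add_left _ _, by omega, by rw [h3]⟩

lemma occ_getD {u w : List Letter} {i : ℕ} (h : OccursAt u w i) :
    ∀ s < u.length, w.getD (i - 1 + s) Letter.c = u.getD s Letter.c := by
  obtain ⟨-, -, h3⟩ := h
  intro s hs
  conv_rhs => rw [← h3]
  rw [show ((w.drop (i-1)).take u.length).getD s Letter.c = (w.drop (i-1)).getD s Letter.c by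
    simp [List.getD_eq_getElem?_getD, List.getElem?_take, hs]]
  simp [List.getD_eq_getElem?_getD, List.getElem?_drop]

lemma sig_getD_even {w : List Letter} (hw : NoC w) {t : ℕ} (ht : t < w.length) :
    (sigmaw w).getD (2 * t) Letter.c = Letter.a := by
  have hd : (sigmaw w).getD (2*t) Letter.c = (sigmaw (w.drop t)).getD 0 Letter.c := by
    rw [← drop_sigmaw hw t]
    simp [List.getD_eq_getElem?_getD, List.getElem?_drop]
  rw [hd]
  rcases hx : w.drop t with _ | ⟨x, r⟩
  · exfalso; have := congrArg List.length hx; simp at this; omega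
  · have hxc : x ≠ Letter.c := by
      have : x ∈ w.drop t := by rw [hx]; exact (List.mem_cons_self : x ∈ x :: r)
      exact fun hc => (noC_drop hw t) (hc ▸ this)
    cases x <;> simp [sigmaw_cons] <;> exact absurd rfl hxc

lemma sig_getD_odd {u : List Letter} (hu : NoC u) {k : ℕ} (hk : k < u.length)
    (ha : u.getD k Letter.c = Letter.a) :
    (sigmaw u).getD (2 * k + 1) Letter.c = Letter.b := by
  have hd : (sigmaw u).getD (2*k+1) Letter.c = (sigmaw (u.drop k)).getD 1 Letter.c := by
    rw [← drop_sigmaw hu k]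
    simp [List.getD_eq_getElem?_getD, List.getElem?_drop]
  rw [hd]
  rcases hx : u.drop k with _ | ⟨x, r⟩
  · exfalso; have := congrArg List.length hx; simp at this; omega
  · have h0 : (u.drop k).getD 0 Letter.c = u.getD k Letter.c := by
      simp [List.getD_eq_getElem?_getD, List.getElem?_drop]
    rw [hx] at h0
    simp only [List.getD_cons_zero] at h0
    have hxa : x = Letter.a := h0.trans ha
    subst hxa
    simp [sigmaw_cons]

lemma occ_nonaligned {u w : List Letter} (hu : NoC u) (hw : NoC w)
    (ha : Letter.a ∈ u) (j : ℕ) :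
    ¬ OccursAt (sigmaw u) (sigmaw w) (2 * j + 2) := by
  intro h
  obtain ⟨k, hk, hka⟩ := List.getElem_of_mem ha
  have ha' : u.getD k Letter.c = Letter.a := by
    simp [List.getD_eq_getElem?_getD, List.getElem?_eq_getElem hk, hka]
  have hlen := h.2.1
  rw [length_sigmaw hu, length_sigmaw hw] at hlen
  have hs : 2 * k + 1 < (sigmaw u).length := by rw [length_sigmaw hu]; omega
  have heq := occ_getD h (2 * k + 1) hs
  rw [sig_getD_odd hu hk ha'] at heq
  have hidx : 2 * j + 2 - 1 + (2 * k + 1) = 2 * (j + k + 1) := by omega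
  rw [hidx] at heq
  rw [sig_getD_even hw (by omega : j + k + 1 < w.length)] at heq
  exact absurd heq (by decide)


lemma iter_sigmaw_append (m : ℕ) (u v : List Letter) :
    sigmaw^[m] (u ++ v) = sigmaw^[m] u ++ sigmaw^[m] v := by
  induction m generalizing u v with
  | zero => simp
  | succ m ih => simp only [Function.iterate_succ_apply, sigmaw_append, ih]

lemma A_sig (m : ℕ) : A (m+1) = sigmaw (A m) := Function.iterate_succ_apply' _ _ _
lemma B_sig (m : ℕ) : B (m+1) = sigmaw (B m) := Function.iterate_succ_apply' _ _ _

lemma A_succ (m : ℕ) : A (m+1) = A m ++ B m := by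
  rw [A, Function.iterate_succ_apply]
  rw [show sigmaw [Letter.a] = [Letter.a] ++ [Letter.b] from rfl, iter_sigmaw_append]
  rfl

lemma B_succ (m : ℕ) : B (m+1) = A m ++ A m := by
  rw [B, Function.iterate_succ_apply]
  rw [show sigmaw [Letter.b] = [Letter.a] ++ [Letter.a] from rfl, iter_sigmaw_append]
  rfl

lemma a_mem_A (m : ℕ) : Letter.a ∈ A m := by
  induction m with
  | zero => simp [A]
  | succ m ih => rw [A_succ]; exact List.mem_append.mpr (Or.inl ih)

lemma a_mem_B (m : ℕ) (hm : 1 ≤ m) : Letter.a ∈ B m := by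
  obtain ⟨m', rfl⟩ : ∃ k, m = k + 1 := ⟨m - 1, by omega⟩
  rw [B_succ]
  exact List.mem_append.mpr (Or.inl (a_mem_A m'))

theorem part1 : ∀ m : ℕ, ∀ i, OccursAt (B m) (A m ++ B m) i ↔ i = 2 ^ m + 1 := by
  intro m
  induction m with
  | zero =>
    intro i
    constructor
    · rintro ⟨h1, h2, h3⟩
      rw [show (B 0).length = 1 from rfl, show (A 0 ++ B 0).length = 2 from rfl] at h2
      have hub : i ≤ 2 := by omega
      interval_cases i <;> revert h3 <;> decide
    · rintro rfl
      exact ⟨by decide, by decide, by decide⟩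
  | succ m ih =>
    rcases Nat.eq_zero_or_pos m with rfl | hm
    · intro i
      constructor
      · rintro ⟨h1, h2, h3⟩
        rw [show (B (0+1)).length = 2 from rfl,
            show (A (0+1) ++ B (0+1)).length = 4 from rfl] at h2
        have hub : i ≤ 3 := by omega
        interval_cases i <;> revert h3 <;> decide
      · rintro rfl
        exact ⟨by decide, by decide, by decide⟩
    · intro i
      have hw : A (m+1) ++ B (m+1) = sigmaw (A m ++ B m) := by
        rw [A_sig, B_sig, sigmaw_append]
      rw [hw, B_sig]
      have hu := noC_B m
      have hww : NoC (A m ++ B m) := noC_append (noC_A m) (noC_B m)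
      have ha : Letter.a ∈ B m := a_mem_B m hm
      have hp : 2 ^ (m+1) = 2 * 2 ^ m := by rw [pow_succ]; ring
      have hpos : 1 ≤ 2 ^ m := Nat.one_le_two_pow
      rcases Nat.even_or_odd i with ⟨j, rfl⟩ | ⟨j, rfl⟩
      · constructor
        · intro h
          rcases Nat.eq_zero_or_pos j with rfl | hj
          · exact absurd h.1 (by omega)
          · obtain ⟨j', rfl⟩ : ∃ k, j = k + 1 := ⟨j - 1, by omega⟩
            rw [show j' + 1 + (j' + 1) = 2 * j' + 2 from by ring] at h
            exact absurd h (occ_nonaligned hu hww ha j')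
        · intro h; exfalso; omega
      · rw [occ_aligned hu hww j, ih (j + 1)]
        constructor <;> intro h <;> omega

theorem part2 : ∀ m : ℕ, 1 ≤ m → ∀ i, OccursAt (B m) (B m ++ A m ++ B m) i ↔
    i = 1 ∨ i = 2 ^ (m - 1) + 1 ∨ i = 2 ^ (m + 1) + 1 := by
  intro m
  induction m with
  | zero => omega
  | succ m ih =>
    intro _
    rcases Nat.eq_zero_or_pos m with rfl | hm
    · intro i
      constructor
      · rintro ⟨h1, h2, h3⟩
        rw [show (B (0+1)).length = 2 from rfl,
            show (B (0+1) ++ A (0+1) ++ B (0+1)).length = 6 from rfl] at h2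
        have hub : i ≤ 5 := by omega
        interval_cases i <;> revert h3 <;> decide
      · rintro (rfl | rfl | rfl) <;> exact ⟨by decide, by decide, by decide⟩
    · intro i
      have hw : B (m+1) ++ A (m+1) ++ B (m+1) = sigmaw (B m ++ A m ++ B m) := by
        rw [A_sig, B_sig, sigmaw_append, sigmaw_append]
      rw [hw, B_sig]
      have hu := noC_B m
      have hww : NoC (B m ++ A m ++ B m) :=
        noC_append (noC_append (noC_B m) (noC_A m)) (noC_B m)
      have ha : Letter.a ∈ B m := a_mem_B m hm
      have hp1 : 2 ^ (m+1) = 2 * 2 ^ m := by rw [pow_succ]; ring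
      have hp2 : 2 ^ (m+2) = 2 * 2 ^ (m+1) := by rw [pow_succ]; ring
      have hp3 : 2 ^ m = 2 * 2 ^ (m-1) := by
        conv_lhs => rw [show m = m - 1 + 1 from by omega]
        rw [pow_succ]; ring
      have hpos : 1 ≤ 2 ^ (m-1) := Nat.one_le_two_pow
      simp only [Nat.add_sub_cancel]
      rcases Nat.even_or_odd i with ⟨j, rfl⟩ | ⟨j, rfl⟩
      · constructor
        · intro h
          rcases Nat.eq_zero_or_pos j with rfl | hj
          · exact absurd h.1 (by omega)
          · obtain ⟨j', rfl⟩ : ∃ k, j = k + 1 := ⟨j - 1, by omega⟩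
            rw [show j' + 1 + (j' + 1) = 2 * j' + 2 from by ring] at h
            exact absurd h (occ_nonaligned hu hww ha j')
        · intro h; exfalso; omega
      · rw [occ_aligned hu hww j, ih hm (j + 1)]
        constructor <;> intro h <;> omega

theorem part3 : ∀ m : ℕ, 1 ≤ m → ∀ i,
    OccursAt (B m) (B m ++ A m ++ A m ++ A m ++ B m) i ↔
    i = 1 ∨ i = 2 ^ (m - 1) + 1 ∨ i = 2 ^ (m + 2) + 1 := by
  intro m
  induction m with
  | zero => omega
  | succ m ih =>
    intro _
    rcases Nat.eq_zero_or_pos m with rfl | hm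
    · intro i
      constructor
      · rintro ⟨h1, h2, h3⟩
        rw [show (B (0+1)).length = 2 from rfl,
            show (B (0+1) ++ A (0+1) ++ A (0+1) ++ A (0+1) ++ B (0+1)).length = 10 from rfl] at h2
        have hub : i ≤ 9 := by omega
        interval_cases i <;> revert h3 <;> decide
      · rintro (rfl | rfl | rfl) <;> exact ⟨by decide, by decide, by decide⟩
    · intro i
      have hw : B (m+1) ++ A (m+1) ++ A (m+1) ++ A (m+1) ++ B (m+1) =
          sigmaw (B m ++ A m ++ A m ++ A m ++ B m) := by
        rw [A_sig, B_sig, sigmaw_append, sigmaw_append, sigmaw_append, sigmaw_append]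
      rw [hw, B_sig]
      have hu := noC_B m
      have hww : NoC (B m ++ A m ++ A m ++ A m ++ B m) :=
        noC_append (noC_append (noC_append (noC_append (noC_B m) (noC_A m)) (noC_A m))
          (noC_A m)) (noC_B m)
      have ha : Letter.a ∈ B m := a_mem_B m hm
      have hp1 : 2 ^ (m+2) = 2 * 2 ^ (m+1) := by rw [pow_succ]; ring
      have hp2 : 2 ^ (m+1+2) = 2 * 2 ^ (m+2) := by
        rw [show m+1+2 = (m+2)+1 from by omega, pow_succ]; ring
      have hp3 : 2 ^ m = 2 * 2 ^ (m-1) := by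
        conv_lhs => rw [show m = m - 1 + 1 from by omega]
        rw [pow_succ]; ring
      have hpos : 1 ≤ 2 ^ (m-1) := Nat.one_le_two_pow
      simp only [Nat.add_sub_cancel]
      rcases Nat.even_or_odd i with ⟨j, rfl⟩ | ⟨j, rfl⟩
      · constructor
        · intro h
          rcases Nat.eq_zero_or_pos j with rfl | hj
          · exact absurd h.1 (by omega)
          · obtain ⟨j', rfl⟩ : ∃ k, j = k + 1 := ⟨j - 1, by omega⟩
            rw [show j' + 1 + (j' + 1) = 2 * j' + 2 from by ring] at h
            exact absurd h (occ_nonaligned hu hww ha j')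
        · intro h; exfalso; omega
      · rw [occ_aligned hu hww j, ih hm (j + 1)]
        constructor <;> intro h <;> omega


/-- (1) For every m ≥ 0, B_m occurs exactly once in A_m B_m, at position
2^m + 1. (2) For every m ≥ 1, B_m occurs exactly three times in B_m A_m B_m, at
positions 1, 2^{m−1} + 1 and 2^{m+1} + 1. (3) For every m ≥ 1, B_m occurs exactly
three times in B_m A_m A_m A_m B_m, at positions 1, 2^{m−1} + 1 and 2^{m+2} + 1. -/
theorem Bm_occurrences :
    (∀ m : ℕ, ∀ i, OccursAt (B m) (A m ++ B m) i ↔ i = 2 ^ m + 1) ∧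
    (∀ m : ℕ, 1 ≤ m → ∀ i, OccursAt (B m) (B m ++ A m ++ B m) i ↔
      i = 1 ∨ i = 2 ^ (m - 1) + 1 ∨ i = 2 ^ (m + 1) + 1) ∧
    (∀ m : ℕ, 1 ≤ m → ∀ i, OccursAt (B m) (B m ++ A m ++ A m ++ A m ++ B m) i ↔
      i = 1 ∨ i = 2 ^ (m - 1) + 1 ∨ i = 2 ^ (m + 2) + 1) := ⟨part1, part2, part3⟩
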